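/- Let X = (X_1,…,X_p) and X̃ = (X̃_1,…,X̃_p) be discrete random vectors such that for every subset A ⊆ {1,…,p}, (X, X̃)_{swap(A)} has the same distribution as (X, X̃). Then for each j, the quadruple (X_j, X̃_j, X_{−j}, X̃_{−j}) has the same distribution as (X̃_j, X_j, X_{−j}, X̃_{−j}). Conversely, if the single-swap equality in distribution holds for all j ∈ A, then (X, X̃)_{swap(A)} =_d (X, X̃). -/

import Mathlib

open MeasureTheory

section Aux

variable {α : Type*} [MeasurableSpace α] (p : ℕ)

/-- Swap coordinates in `A` between the two components of a pair of vectors. -/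
def swapPair (A : Finset (Fin p)) (q : (Fin p → α) × (Fin p → α)) :
    (Fin p → α) × (Fin p → α) :=
  (fun j => if j ∈ A then q.2 j else q.1 j, fun j => if j ∈ A then q.1 j else q.2 j)

/-- Split a pair of vectors at coordinate `j`. -/
def quadF (j : Fin p) (q : (Fin p → α) × (Fin p → α)) :
    α × α × ({i : Fin p // i ≠ j} → α) × ({i : Fin p // i ≠ j} → α) :=
  (q.1 j, q.2 j, fun i => q.1 i, fun i => q.2 i)

/-- Split and swap coordinate `j`. -/
def swapQuad (j : Fin p) (q : (Fin p → α) × (Fin p → α)) :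
    α × α × ({i : Fin p // i ≠ j} → α) × ({i : Fin p // i ≠ j} → α) :=
  (q.2 j, q.1 j, fun i => q.1 i, fun i => q.2 i)

/-- Reconstruct a pair of vectors from the split data. -/
def quadG (j : Fin p) (t : α × α × ({i : Fin p // i ≠ j} → α) × ({i : Fin p // i ≠ j} → α)) :
    (Fin p → α) × (Fin p → α) :=
  (fun i => if h : i = j then t.1 else t.2.2.1 ⟨i, h⟩,
   fun i => if h : i = j then t.2.1 else t.2.2.2 ⟨i, h⟩)

lemma measurable_swapPair (A : Finset (Fin p)) : Measurable (swapPair (α := α) p A) := by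
  apply Measurable.prodMk <;> refine measurable_pi_lambda _ fun j => ?_ <;>
    by_cases h : j ∈ A <;> simp only [h, if_true, if_false]
  · exact (measurable_pi_apply j).comp measurable_snd
  · exact (measurable_pi_apply j).comp measurable_fst
  · exact (measurable_pi_apply j).comp measurable_fst
  · exact (measurable_pi_apply j).comp measurable_snd

lemma measurable_quadF (j : Fin p) : Measurable (quadF (α := α) p j) :=
  Measurable.prodMk ((measurable_pi_apply j).comp measurable_fst) <|
  Measurable.prodMk ((measurable_pi_apply j).comp measurable_snd) <|
  Measurable.prodMk
    (measurable_pi_lambda _ fun i => (measurable_pi_apply (i : Fin p)).comp measurable_fst)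
    (measurable_pi_lambda _ fun i => (measurable_pi_apply (i : Fin p)).comp measurable_snd)

lemma measurable_quadG (j : Fin p) : Measurable (quadG (α := α) p j) := by
  apply Measurable.prodMk <;> refine measurable_pi_lambda _ fun i => ?_ <;>
    by_cases h : i = j <;> simp only [h, dif_pos, dif_neg, not_false_iff]
  · exact measurable_fst
  · exact (measurable_pi_apply _).comp (measurable_fst.comp (measurable_snd.comp measurable_snd))
  · exact measurable_fst.comp measurable_snd
  · exact (measurable_pi_apply _).comp (measurable_snd.comp (measurable_snd.comp measurable_snd))

lemma swapPair_empty : swapPair (α := α) p ∅ = id := by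
  funext q
  simp [swapPair]

lemma swapPair_insert {j : Fin p} {A : Finset (Fin p)} (hj : j ∉ A) :
    swapPair (α := α) p (insert j A) = swapPair p {j} ∘ swapPair p A := by
  funext q
  simp only [swapPair, Function.comp_apply, Finset.mem_insert, Finset.mem_singleton]
  refine Prod.ext ?_ ?_ <;> funext i <;> by_cases h : i = j <;>
    simp only [h, if_true, if_false, true_or, eq_self_iff_true] <;>
    try simp [hj]
  all_goals by_cases h2 : i ∈ A <;> simp [h, h2]

lemma quadF_comp_swap_single (j : Fin p) :
    quadF (α := α) p j ∘ swapPair p {j} = swapQuad p j := by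
  funext q
  simp only [quadF, swapQuad, swapPair, Function.comp_apply, Finset.mem_singleton]
  refine Prod.ext (by simp) (Prod.ext (by simp) (Prod.ext ?_ ?_)) <;>
    funext i <;> simp [i.2]

lemma quadG_comp_quadF (j : Fin p) :
    quadG (α := α) p j ∘ quadF p j = id := by
  funext q
  simp only [quadG, quadF, Function.comp_apply, id_eq]
  refine Prod.ext ?_ ?_ <;> funext i <;> by_cases h : i = j <;> simp [h]

lemma quadG_comp_swapQuad (j : Fin p) :
    quadG (α := α) p j ∘ swapQuad p j = swapPair p {j} := by
  funext q
  simp only [quadG, swapQuad, swapPair, Function.comp_apply, Finset.mem_singleton]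
  refine Prod.ext ?_ ?_ <;> funext i <;> by_cases h : i = j <;> simp [h]

end Aux

theorem swap_exchangeability_iff_single_swaps
    {Ω : Type*} [MeasurableSpace Ω] (μ : Measure Ω) [IsProbabilityMeasure μ]
    {α : Type*} [MeasurableSpace α] [MeasurableSingletonClass α] [Countable α]
    (p : ℕ) (X Xt : Ω → Fin p → α)
    (hX : Measurable X) (hXt : Measurable Xt) :
    -- single-swap (quadruple) exchangeability for index j:
    (let quadEq : Fin p → Prop := fun j =>
      Measure.map (fun ω => (X ω j, Xt ω j,
          fun i : {i : Fin p // i ≠ j} => X ω i,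
          fun i : {i : Fin p // i ≠ j} => Xt ω i)) μ =
        Measure.map (fun ω => (Xt ω j, X ω j,
          fun i : {i : Fin p // i ≠ j} => X ω i,
          fun i : {i : Fin p // i ≠ j} => Xt ω i)) μ
    -- full-swap exchangeability for a subset A:
    let swapEq : Finset (Fin p) → Prop := fun A =>
      Measure.map (fun ω =>
          ((fun j => if j ∈ A then Xt ω j else X ω j),
           (fun j => if j ∈ A then X ω j else Xt ω j))) μ =
        Measure.map (fun ω => (X ω, Xt ω)) μ
    ((∀ A : Finset (Fin p), swapEq A) → ∀ j : Fin p, quadEq j) ∧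
      (∀ A : Finset (Fin p), (∀ j ∈ A, quadEq j) → swapEq A)) := by
  intro quadEq swapEq
  set pair : Ω → (Fin p → α) × (Fin p → α) := fun ω => (X ω, Xt ω) with hpair_def
  have hpair : Measurable pair := hX.prodMk hXt
  -- the swapped pair map in the statement is `swapPair p A ∘ pair`
  have hswap_comp : ∀ A : Finset (Fin p),
      (fun ω => ((fun j => if j ∈ A then Xt ω j else X ω j),
        (fun j => if j ∈ A then X ω j else Xt ω j))) = swapPair p A ∘ pair := by
    intro A; rfl
  have hquad_comp : ∀ j : Fin p,
      (fun ω => (X ω j, Xt ω j,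
          fun i : {i : Fin p // i ≠ j} => X ω i,
          fun i : {i : Fin p // i ≠ j} => Xt ω i)) = quadF p j ∘ pair := by
    intro j; rfl
  have hsquad_comp : ∀ j : Fin p,
      (fun ω => (Xt ω j, X ω j,
          fun i : {i : Fin p // i ≠ j} => X ω i,
          fun i : {i : Fin p // i ≠ j} => Xt ω i)) = swapQuad p j ∘ pair := by
    intro j; rfl
  -- key equivalence: quadEq j ↔ single-swap invariance
  have key : ∀ j : Fin p,
      quadEq j ↔ Measure.map (swapPair p {j} ∘ pair) μ = Measure.map pair μ := by
    intro j
    simp only [quadEq, hquad_comp, hsquad_comp]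
    constructor
    · intro h
      calc Measure.map (swapPair p {j} ∘ pair) μ
          = Measure.map (quadG p j ∘ (swapQuad p j ∘ pair)) μ := by
            rw [← Function.comp_assoc, quadG_comp_swapQuad]
        _ = Measure.map (quadG p j) (Measure.map (swapQuad p j ∘ pair) μ) := by
            rw [Measure.map_map (measurable_quadG p j)
              ((by measurability : Measurable (swapQuad (α := α) p j)).comp hpair)]
        _ = Measure.map (quadG p j) (Measure.map (quadF p j ∘ pair) μ) := by rw [← h]
        _ = Measure.map (quadG p j ∘ (quadF p j ∘ pair)) μ := by
            rw [Measure.map_map (measurable_quadG p j)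
              ((measurable_quadF p j).comp hpair)]
        _ = Measure.map pair μ := by
            rw [← Function.comp_assoc, quadG_comp_quadF, Function.id_comp]
    · intro h
      calc Measure.map (quadF p j ∘ pair) μ
          = Measure.map (quadF p j) (Measure.map pair μ) := by
            rw [Measure.map_map (measurable_quadF p j) hpair]
        _ = Measure.map (quadF p j) (Measure.map (swapPair p {j} ∘ pair) μ) := by rw [h]
        _ = Measure.map (quadF p j ∘ (swapPair p {j} ∘ pair)) μ := by
            rw [Measure.map_map (measurable_quadF p j)
              ((measurable_swapPair p {j}).comp hpair)]
        _ = Measure.map (swapQuad p j ∘ pair) μ := by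
            rw [← Function.comp_assoc, quadF_comp_swap_single]
  constructor
  · intro hfull j
    rw [key j]
    have h := hfull {j}
    simp only [swapEq, hswap_comp] at h
    exact h
  · intro A
    induction A using Finset.induction_on with
    | empty =>
      intro _
      simp only [swapEq, hswap_comp, swapPair_empty, Function.id_comp]
      rfl
    | insert j A hj ih =>
      intro h
      have hq : quadEq j := h j (Finset.mem_insert_self j A)
      have hA := ih fun k hk => h k (Finset.mem_insert_of_mem hk)
      simp only [swapEq, hswap_comp] at hA ⊢
      rw [key j] at hq
      calc Measure.map (swapPair p (insert j A) ∘ pair) μ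
          = Measure.map (swapPair p {j} ∘ (swapPair p A ∘ pair)) μ := by
            rw [swapPair_insert p hj, Function.comp_assoc]
        _ = Measure.map (swapPair p {j}) (Measure.map (swapPair p A ∘ pair) μ) := by
            rw [Measure.map_map (measurable_swapPair p {j})
              ((measurable_swapPair p A).comp hpair)]
        _ = Measure.map (swapPair p {j}) (Measure.map pair μ) := by rw [hA]
        _ = Measure.map (swapPair p {j} ∘ pair) μ := by
            rw [Measure.map_map (measurable_swapPair p {j}) hpair]
        _ = Measure.map pair μ := hq
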